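/- Every g ∈ GL_r(K_v) factors as g = g_1 g_2 with g_1 ∈ GL_r(K) (viewed inside GL_r(K_v) via the canonical embedding K ↪ K_v) and g_2 ∈ GL_r(O_v). -/

import Mathlib

open Matrix IsDedekindDomain

/-- The maximal ideal of a discrete valuation ring, as a height-one prime. -/
noncomputable def dvrHeightOnePrime (O : Type*) [CommRing O] [IsDomain O]
    [IsDiscreteValuationRing O] : HeightOneSpectrum O where
  asIdeal := IsLocalRing.maximalIdeal O
  isPrime := Ideal.IsMaximal.isPrime (IsLocalRing.maximalIdeal.isMaximal O)
  ne_bot := IsDiscreteValuationRing.not_a_field O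


section MyAux
open Finset Multiplicative
variable {F : Type*} [Field F] {Γ : Type*} [LinearOrderedCommGroupWithZero Γ]
  (v : Valuation F Γ)

-- product of (1 + d i) is close to 1
lemma my_prod_one_add_sub_one_lt {ι : Type*} (s : Finset ι) (d : ι → F)
    (h : ∀ i ∈ s, v (d i) < 1) : v (∏ i ∈ s, (1 + d i) - 1) < 1 := by
  induction s using Finset.cons_induction with
  | empty => simpa using zero_lt_one
  | cons a s ha ih =>
    have hP : v (∏ i ∈ s, (1 + d i) - 1) < 1 := ih fun i hi => h i (Finset.mem_cons_of_mem hi)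
    have hPle : v (∏ i ∈ s, (1 + d i)) ≤ 1 := by
      have := v.map_add (∏ i ∈ s, (1 + d i) - 1) 1
      simpa using le_trans this (max_le hP.le (by simp))
    have hda : v (d a) < 1 := h a (Finset.mem_cons_self a s)
    rw [Finset.prod_cons]
    have key : (1 + d a) * ∏ i ∈ s, (1 + d i) - 1
        = (∏ i ∈ s, (1 + d i) - 1) + d a * ∏ i ∈ s, (1 + d i) := by ring
    rw [key]
    refine lt_of_le_of_lt (v.map_add _ _) (max_lt hP ?_)
    rw [v.map_mul]
    calc v (d a) * v (∏ i ∈ s, (1 + d i)) ≤ v (d a) * 1 := mul_le_mul_right hPle _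
    _ < 1 := by simpa using hda

lemma my_v_eps_eq {n : ℕ} (σ : Equiv.Perm (Fin n)) (x : F) :
    v (((Equiv.Perm.sign σ : ℤ) : F) * x) = v x := by
  rcases Int.units_eq_one_or (Equiv.Perm.sign σ) with h | h <;> rw [h] <;>
    simp [v.map_neg]

lemma my_det_le {n : ℕ} (M : Matrix (Fin n) (Fin n) F) (h : ∀ i j, v (M i j) ≤ 1) :
    v M.det ≤ 1 := by
  rw [Matrix.det_apply']
  refine v.map_sum_le fun σ _ => ?_
  rw [my_v_eps_eq, map_prod v]
  exact Finset.prod_le_one' fun i _ => h _ _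

lemma my_det_one_add_sub_one_lt {n : ℕ} (E : Matrix (Fin n) (Fin n) F)
    (h : ∀ i j, v (E i j) < 1) : v ((1 + E).det - 1) < 1 := by
  rw [Matrix.det_apply']
  have h1 : ∀ i j, v ((1 + E) i j) ≤ 1 := by
    intro i j
    rcases eq_or_ne i j with rfl | hij
    · simpa using le_trans (v.map_add _ _) (max_le (by simp) (h i i).le)
    · simpa [Matrix.one_apply_ne hij] using (h i j).le
  rw [← Finset.sum_erase_add _ _ (Finset.mem_univ (1 : Equiv.Perm (Fin n)))]
  have key : ∀ σ ∈ Finset.univ.erase (1 : Equiv.Perm (Fin n)),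
      v (((Equiv.Perm.sign σ : ℤ) : F) * ∏ i, (1 + E) (σ i) i) < 1 := by
    intro σ hσ
    rw [my_v_eps_eq, map_prod v]
    obtain ⟨i₀, hi₀⟩ : ∃ i, σ i ≠ i := by
      by_contra hcon
      push_neg at hcon
      exact (Finset.mem_erase.1 hσ).1 (Equiv.ext fun i => hcon i)
    rw [← Finset.prod_erase_mul _ _ (Finset.mem_univ i₀)]
    calc (∏ i ∈ Finset.univ.erase i₀, v ((1 + E) (σ i) i)) * v ((1 + E) (σ i₀) i₀)
        ≤ 1 * v ((1 + E) (σ i₀) i₀) :=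
          mul_le_mul_left (Finset.prod_le_one' fun i _ => h1 _ _) _
      _ < 1 := by
          rw [one_mul]
          have : (1 + E) (σ i₀) i₀ = E (σ i₀) i₀ := by
            simp [Matrix.add_apply, Matrix.one_apply_ne hi₀]
          rw [this]; exact h _ _
  have hsum : v (∑ σ ∈ Finset.univ.erase (1 : Equiv.Perm (Fin n)),
      ((Equiv.Perm.sign σ : ℤ) : F) * ∏ i, (1 + E) (σ i) i) < 1 := v.map_sum_lt one_ne_zero key
  have hid : v (((Equiv.Perm.sign (1 : Equiv.Perm (Fin n)) : ℤ) : F)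
      * ∏ i, (1 + E) i i - 1) < 1 := by
    rw [show (((Equiv.Perm.sign (1 : Equiv.Perm (Fin n)) : ℤ) : F)) = 1 by simp, one_mul]
    have : ∀ i : Fin n, (1 + E) i i = 1 + E i i := by
      intro i; simp [Matrix.add_apply]
    simp_rw [this]
    exact my_prod_one_add_sub_one_lt v Finset.univ (fun i => E i i) fun i _ => h i i
  simp only [Equiv.Perm.one_apply]
  rw [add_sub_assoc]
  exact lt_of_le_of_lt (v.map_add _ _) (max_lt hsum hid)

lemma my_unit_of_close {n : ℕ} (E : Matrix (Fin n) (Fin n) F)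
    (h : ∀ i j, v (E i j) < 1) :
    ∃ u : (Matrix (Fin n) (Fin n) F)ˣ, (↑u : Matrix (Fin n) (Fin n) F) = 1 + E ∧
      (∀ i j, v ((1 + E) i j) ≤ 1) ∧
      (∀ i j, v ((↑u⁻¹ : Matrix (Fin n) (Fin n) F) i j) ≤ 1) := by
  have h1 : ∀ i j, v ((1 + E) i j) ≤ 1 := by
    intro i j
    rcases eq_or_ne i j with rfl | hij
    · simpa using le_trans (v.map_add _ _) (max_le (by simp) (h i i).le)
    · simpa [Matrix.one_apply_ne hij] using (h i j).le
  have hdet1 : v (1 + E).det = 1 := by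
    have hrw : (1 + E).det = 1 + ((1 + E).det - 1) := by ring
    rw [hrw]
    exact v.map_one_add_of_lt (my_det_one_add_sub_one_lt v E h)
  have hne : (1 + E).det ≠ 0 := by
    intro h0
    rw [h0, v.map_zero] at hdet1
    exact zero_ne_one hdet1
  have hu : IsUnit (1 + E) := (Matrix.isUnit_iff_isUnit_det _).2 (isUnit_iff_ne_zero.2 hne)
  refine ⟨hu.unit, hu.unit_spec, h1, fun i j => ?_⟩
  have hinv : (↑hu.unit⁻¹ : Matrix (Fin n) (Fin n) F) = (1 + E)⁻¹ := by
    rw [Matrix.coe_units_inv, hu.unit_spec]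
  rw [hinv, Matrix.inv_def, Ring.inverse_eq_inv', Matrix.smul_apply, smul_eq_mul, v.map_mul,
    map_inv₀, hdet1, inv_one, one_mul, Matrix.adjugate_apply]
  refine my_det_le v _ fun i' j' => ?_
  rw [Matrix.updateRow_apply]
  split
  · rcases eq_or_ne j' i with rfl | hji
    · simp [Pi.single_apply]
    · simp [Pi.single_apply, Ne.symm hji]
  · exact h1 _ _

end MyAux

set_option maxHeartbeats 2000000 in
open IsDedekindDomain Matrix Multiplicative in
theorem my_general_factorization
    (R K : Type*) [CommRing R] [IsDedekindDomain R]
    [Field K] [Algebra R K] [IsFractionRing R K] (v' : HeightOneSpectrum R) (r : ℕ)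
    (g : GL (Fin r) (v'.adicCompletion K)) :
    ∃ g₁ g₂ : GL (Fin r) (v'.adicCompletion K),
      (∀ i j, (g₁ : Matrix (Fin r) (Fin r) (v'.adicCompletion K)) i j ∈
        (algebraMap K (v'.adicCompletion K)).range) ∧
      (∀ i j, (g₂ : Matrix (Fin r) (Fin r) (v'.adicCompletion K)) i j ∈
        v'.adicCompletionIntegers K) ∧
      (∀ i j, ((g₂⁻¹ : GL (Fin r) (v'.adicCompletion K)) :
          Matrix (Fin r) (Fin r) (v'.adicCompletion K)) i j ∈
        v'.adicCompletionIntegers K) ∧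
      g = g₁ * g₂ := by
  set Kv := v'.adicCompletion K with hKv
  set c : WithZero (Multiplicative ℤ) := Finset.univ.sup
    (fun p : Fin r × Fin r =>
      Valued.v (((g⁻¹ : GL (Fin r) Kv) : Matrix (Fin r) (Fin r) Kv) p.1 p.2)) with hc
  obtain ⟨γ, hγ0, hγ1⟩ : ∃ γ : WithZero (Multiplicative ℤ), γ ≠ 0 ∧ c * γ < 1 := by
    by_cases hc0 : c = 0
    · exact ⟨1, one_ne_zero, by rw [hc0, zero_mul]; exact zero_lt_one⟩
    · refine ⟨c⁻¹ * (↑(Multiplicative.ofAdd (-1 : ℤ)) : WithZero (Multiplicative ℤ)),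
        mul_ne_zero (inv_ne_zero hc0) WithZero.coe_ne_zero, ?_⟩
      rw [← mul_assoc, mul_inv_cancel₀ hc0, one_mul, ← WithZero.coe_one, WithZero.coe_lt_coe]
      exact Multiplicative.ofAdd_lt.2 (by norm_num)
  have happrox : ∀ x : Kv, ∃ a : K, Valued.v (algebraMap K Kv a - x) < γ := by
    intro x
    have hd : DenseRange (algebraMap K Kv) :=
      HeightOneSpectrum.denseRange_algebraMap (R := R) K v'
    have hnhds : {y : Kv | Valued.v (y - x) < γ} ∈ nhds x := by
      obtain ⟨z, hz⟩ := v'.valuation_surjective K γ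
      have hz' : Valued.v (z : Kv) = γ := by simpa using hz
      have hne : (Valued.v (R := Kv)).restrict (z : Kv) ≠ 0 :=
        ne_of_gt (by rw [Valuation.restrict_pos_iff, hz']; exact zero_lt_iff.2 hγ0)
      refine Valued.mem_nhds.2 ⟨Units.mk0 _ hne, fun y hy => ?_⟩
      have hy' : (Valued.v (R := Kv)).restrict (y - x) < (Valued.v (R := Kv)).restrict (z : Kv) := hy
      show Valued.v (y - x) < γ
      rw [← hz']
      exact (Valuation.restrict_lt_iff _).1 hy'
    obtain ⟨y, hy1, a, rfl⟩ := mem_closure_iff_nhds.1 (hd x) _ hnhds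
    refine ⟨a, ?_⟩
    exact hy1
  choose a ha using happrox
  set A : Matrix (Fin r) (Fin r) Kv :=
    Matrix.of (fun i j => algebraMap K Kv (a ((g : Matrix (Fin r) (Fin r) Kv) i j))) with hA
  set E : Matrix (Fin r) (Fin r) Kv :=
    ((g⁻¹ : GL (Fin r) Kv) : Matrix (Fin r) (Fin r) Kv) *
      (A - (g : Matrix (Fin r) (Fin r) Kv)) with hE
  have hEsmall : ∀ i j, Valued.v (E i j) < 1 := by
    intro i j
    rw [hE, Matrix.mul_apply]
    refine Valuation.map_sum_lt _ one_ne_zero fun k _ => ?_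
    rw [Valued.v.map_mul]
    calc Valued.v (((g⁻¹ : GL (Fin r) Kv) : Matrix (Fin r) (Fin r) Kv) i k) *
          Valued.v ((A - (g : Matrix (Fin r) (Fin r) Kv)) k j)
        ≤ c * γ := by
          refine mul_le_mul' ?_ ?_
          · rw [hc]
            have h3 := Finset.le_sup (f := fun p : Fin r × Fin r =>
              Valued.v (((g⁻¹ : GL (Fin r) Kv) : Matrix (Fin r) (Fin r) Kv) p.1 p.2))
              (Finset.mem_univ (i, k))
            exact le_of_le_of_eq h3 rfl
          rw [Matrix.sub_apply, hA, Matrix.of_apply]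
          have h4 := (ha ((g : Matrix (Fin r) (Fin r) Kv) k j)).le
          exact h4
      _ < 1 := hγ1
  obtain ⟨u, huval, hu1, huinv⟩ := my_unit_of_close (Valued.v (R := Kv)) E hEsmall
  refine ⟨g * u, u⁻¹, ?_, ?_, ?_, ?_⟩
  · intro i j
    have hgu : ((g * u : GL (Fin r) Kv) : Matrix (Fin r) (Fin r) Kv) = A := by
      rw [Units.val_mul, huval, mul_add, mul_one, hE, ← Matrix.mul_assoc,
        ← Units.val_mul, mul_inv_cancel, Units.val_one, Matrix.one_mul]
      abel
    rw [hgu]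
    exact ⟨a ((g : Matrix (Fin r) (Fin r) Kv) i j), rfl⟩
  · intro i j
    exact (HeightOneSpectrum.mem_adicCompletionIntegers R K v').2 (huinv i j)
  · intro i j
    rw [inv_inv, huval]
    exact (HeightOneSpectrum.mem_adicCompletionIntegers R K v').2 (hu1 i j)
  · rw [mul_inv_cancel_right]

/-- **Iwasawa-type decomposition at a completed place.** Let `O` be a DVR with fraction
field `K`, let `K_v` be the completion of `K` at the valuation of `O` and `O_v ⊆ K_v` its
ring of integers. Every `g ∈ GL_r(K_v)` factors as `g = g₁ g₂` where `g₁` has all entries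
in (the image of) `K` and `g₂` together with `g₂⁻¹` has all entries in `O_v`. -/
theorem exists_factorization_rational_mul_integral
    (O K : Type*) [CommRing O] [IsDomain O] [IsDiscreteValuationRing O]
    [Field K] [Algebra O K] [IsFractionRing O K] (r : ℕ)
    (g : GL (Fin r) ((dvrHeightOnePrime O).adicCompletion K)) :
    ∃ g₁ g₂ : GL (Fin r) ((dvrHeightOnePrime O).adicCompletion K),
      (∀ i j, (g₁ : Matrix (Fin r) (Fin r) ((dvrHeightOnePrime O).adicCompletion K)) i j ∈
        (algebraMap K ((dvrHeightOnePrime O).adicCompletion K)).range) ∧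
      (∀ i j, (g₂ : Matrix (Fin r) (Fin r) ((dvrHeightOnePrime O).adicCompletion K)) i j ∈
        (dvrHeightOnePrime O).adicCompletionIntegers K) ∧
      (∀ i j, ((g₂⁻¹ : GL (Fin r) ((dvrHeightOnePrime O).adicCompletion K)) :
          Matrix (Fin r) (Fin r) ((dvrHeightOnePrime O).adicCompletion K)) i j ∈
        (dvrHeightOnePrime O).adicCompletionIntegers K) ∧
      g = g₁ * g₂ := by
  exact my_general_factorization O K (dvrHeightOnePrime O) r g
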